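/- Let n ≥ 2 be an integer. Let (R_1,Z_1),…,(R_n,Z_n) be i.i.d. copies of a pair (R,Z) of square-integrable real random variables satisfying Cov(R_k, Z_j) = 0 for all j,k and Cov(R_k R_{k'}, Z_j Z_{j'}) = 0 for all j,j',k,k'. Write μ_Z = E[Z] and σ_Z² = Var(Z). Then E[(2/(n²(n−1))) (Σ_{j=1}^n R_j Z_j)(Σ_{j'=1}^n Σ_{k=1,k≠j'}^n R_k Z_{j'})] = E[R²] (2/n) μ_Z² + (E[R])² (((2n−2)/n) μ_Z² + (2/n) σ_Z²). -/

import Mathlib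

open MeasureTheory ProbabilityTheory Finset

/-- Covariance of two real random variables. -/
noncomputable def covar {Ω : Type*} [MeasurableSpace Ω] (μ : Measure Ω) (X Y : Ω → ℝ) : ℝ :=
  (∫ ω, X ω * Y ω ∂μ) - (∫ ω, X ω ∂μ) * (∫ ω, Y ω ∂μ)

private lemma integrable_mul_of_memL2 {Ω : Type*} [MeasurableSpace Ω] {μ : Measure Ω}
    {f g : Ω → ℝ} (hf : MemLp f 2 μ) (hg : MemLp g 2 μ) :
    Integrable (fun ω => f ω * g ω) μ := by
  refine Integrable.mono' ((hf.integrable_sq.add hg.integrable_sq).div_const 2)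
    (hf.1.mul hg.1) (ae_of_all _ fun ω => ?_)
  simp only [Pi.add_apply, Real.norm_eq_abs, abs_mul]
  nlinarith [sq_nonneg (|f ω| - |g ω|), sq_abs (f ω), sq_abs (g ω),
    abs_nonneg (f ω), abs_nonneg (g ω)]

private lemma iIndepFun_of_ae_eq {Ω : Type*} [MeasurableSpace Ω] {μ : Measure Ω}
    {ι : Type*} {β : Type*} [m' : MeasurableSpace β] {f g : ι → Ω → β}
    (hf : iIndepFun f μ) (h : ∀ i, f i =ᵐ[μ] g i) :
    iIndepFun g μ := by
  rw [iIndepFun_iff_measure_inter_preimage_eq_mul] at hf ⊢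
  intro S sets hsets
  have hpre : ∀ i (s : Set β), μ (g i ⁻¹' s) = μ (f i ⁻¹' s) := by
    intro i s
    refine measure_congr (Filter.eventuallyEq_set.2 ?_)
    filter_upwards [h i] with ω hω
    simp [Set.mem_preimage, hω]
  have hint : μ (⋂ i ∈ S, g i ⁻¹' sets i) = μ (⋂ i ∈ S, f i ⁻¹' sets i) := by
    refine measure_congr (Filter.eventuallyEq_set.2 ?_)
    have hae : ∀ᵐ ω ∂μ, ∀ i ∈ S, f i ω = g i ω :=
      (ae_ball_iff S.countable_toSet).2 fun i _ => h i
    filter_upwards [hae] with ω hω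
    simp only [Set.mem_iInter, Set.mem_preimage]
    exact ⟨fun H i hi => (hω i hi) ▸ H i hi, fun H i hi => (hω i hi).symm ▸ H i hi⟩
  rw [hint, hf S hsets]
  exact Finset.prod_congr rfl fun i _ => (hpre i (sets i)).symm

theorem rloo_moment_C3_identity
    {Ω : Type*} [MeasurableSpace Ω] (μ : Measure Ω) [IsProbabilityMeasure μ]
    (n : ℕ) (hn : 2 ≤ n)
    (R Z : Ω → ℝ) (Rv Zv : Fin n → Ω → ℝ)
    (hR2 : MemLp R 2 μ) (hZ2 : MemLp Z 2 μ)
    (hident : ∀ i, IdentDistrib (fun ω => (Rv i ω, Zv i ω)) (fun ω => (R ω, Z ω)) μ μ)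
    (hindep : iIndepFun (fun i ω => (Rv i ω, Zv i ω)) μ)
    (hcov1 : ∀ j k, covar μ (Rv k) (Zv j) = 0)
    (hcov2 : ∀ j j' k k', covar μ (fun ω => Rv k ω * Rv k' ω)
      (fun ω => Zv j ω * Zv j' ω) = 0)
    :
    (∫ ω, (2 / ((n : ℝ) ^ 2 * ((n : ℝ) - 1))) * (∑ j, Rv j ω * Zv j ω)
        * (∑ j', ∑ k ∈ Finset.univ.erase j', Rv k ω * Zv j' ω) ∂μ)
      = (∫ ω, R ω ^ 2 ∂μ) * ((2 / (n : ℝ)) * (∫ ω, Z ω ∂μ) ^ 2)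
        + (∫ ω, R ω ∂μ) ^ 2
          * ((2 * (n : ℝ) - 2) / (n : ℝ) * (∫ ω, Z ω ∂μ) ^ 2
            + (2 / (n : ℝ)) * variance Z μ) := by
  classical
  have hn2 : (2 : ℝ) ≤ (n : ℝ) := by exact_mod_cast hn
  have hn0 : (n : ℝ) ≠ 0 := by linarith
  have hn1 : (n : ℝ) - 1 ≠ 0 := by linarith
  have hvar : variance Z μ = (∫ ω, Z ω ^ 2 ∂μ) - (∫ ω, Z ω ∂μ) ^ 2 := by
    rw [variance_eq_sub hZ2]
    simp only [Pi.pow_apply]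
  rw [hvar]
  by_cases hI : Integrable (fun ω => R ω ^ 2 * Z ω ^ 2) μ
  · -- main case
    have hXae : ∀ i, AEMeasurable (fun ω => (Rv i ω, Zv i ω)) μ := fun i =>
      (hident i).aemeasurable_fst
    set X' : Fin n → Ω → ℝ × ℝ := fun i => (hXae i).mk _ with hX'def
    have hX'meas : ∀ i, Measurable (X' i) := fun i => (hXae i).measurable_mk
    have hX'ae : ∀ i, (fun ω => (Rv i ω, Zv i ω)) =ᵐ[μ] X' i := fun i => (hXae i).ae_eq_mk
    set R' : Fin n → Ω → ℝ := fun i ω => (X' i ω).1 with hR'def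
    set Z' : Fin n → Ω → ℝ := fun i ω => (X' i ω).2 with hZ'def
    have hR'ae : ∀ i, Rv i =ᵐ[μ] R' i := fun i =>
      (hX'ae i).mono fun ω h => congrArg Prod.fst h
    have hZ'ae : ∀ i, Zv i =ᵐ[μ] Z' i := fun i =>
      (hX'ae i).mono fun ω h => congrArg Prod.snd h
    have hR'm : ∀ i, Measurable (R' i) := fun i => measurable_fst.comp (hX'meas i)
    have hZ'm : ∀ i, Measurable (Z' i) := fun i => measurable_snd.comp (hX'meas i)
    have hindep' : iIndepFun X' μ := iIndepFun_of_ae_eq hindep hX'ae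
    have hid : ∀ i, IdentDistrib (X' i) (fun ω => (R ω, Z ω)) μ μ := fun i =>
      (IdentDistrib.of_ae_eq (hXae i) (hX'ae i)).symm.trans (hident i)
    have idR : ∀ i, IdentDistrib (R' i) R μ μ := fun i => (hid i).comp measurable_fst
    have idZ : ∀ i, IdentDistrib (Z' i) Z μ μ := fun i => (hid i).comp measurable_snd
    have mR' : ∀ i, MemLp (R' i) 2 μ := fun i => (idR i).symm.memLp_snd hR2
    have mZ' : ∀ i, MemLp (Z' i) 2 μ := fun i => (idZ i).symm.memLp_snd hZ2
    have eR1 : ∀ i, ∫ ω, R' i ω ∂μ = ∫ ω, R ω ∂μ := fun i => (idR i).integral_eq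
    have eZ1 : ∀ i, ∫ ω, Z' i ω ∂μ = ∫ ω, Z ω ∂μ := fun i => (idZ i).integral_eq
    have eR2 : ∀ i, ∫ ω, R' i ω ^ 2 ∂μ = ∫ ω, R ω ^ 2 ∂μ := fun i =>
      ((hid i).comp (measurable_fst.pow_const 2)).integral_eq
    have eZ2 : ∀ i, ∫ ω, Z' i ω ^ 2 ∂μ = ∫ ω, Z ω ^ 2 ∂μ := fun i =>
      ((hid i).comp (measurable_snd.pow_const 2)).integral_eq
    have hI' : ∀ i, Integrable (fun ω => R' i ω ^ 2 * Z' i ω ^ 2) μ := fun i =>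
      (((hid i).comp ((measurable_fst.pow_const 2).mul
        (measurable_snd.pow_const 2))).integrable_iff).2 hI
    have intRRZ : ∀ i, Integrable (fun ω => R' i ω ^ 2 * Z' i ω) μ := by
      intro i
      refine Integrable.mono' (((mR' i).integrable_sq.add (hI' i)).div_const 2)
        (((hR'm i).pow_const 2).mul (hZ'm i)).aestronglyMeasurable (ae_of_all _ fun ω => ?_)
      simp only [Pi.add_apply, Real.norm_eq_abs, abs_mul, abs_pow]
      nlinarith [mul_nonneg (sq_nonneg (R' i ω)) (sq_nonneg (|Z' i ω| - 1)),
        sq_abs (Z' i ω), sq_abs (R' i ω), abs_nonneg (Z' i ω), sq_nonneg (R' i ω)]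
    have intRZZ : ∀ i, Integrable (fun ω => R' i ω * Z' i ω ^ 2) μ := by
      intro i
      refine Integrable.mono' (((mZ' i).integrable_sq.add (hI' i)).div_const 2)
        ((hR'm i).mul ((hZ'm i).pow_const 2)).aestronglyMeasurable (ae_of_all _ fun ω => ?_)
      simp only [Pi.add_apply, Real.norm_eq_abs, abs_mul, abs_pow]
      nlinarith [mul_nonneg (sq_nonneg (Z' i ω)) (sq_nonneg (|R' i ω| - 1)),
        sq_abs (Z' i ω), sq_abs (R' i ω), abs_nonneg (R' i ω), sq_nonneg (Z' i ω)]
    have intRZ : ∀ i, Integrable (fun ω => R' i ω * Z' i ω) μ := fun i =>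
      integrable_mul_of_memL2 (mR' i) (mZ' i)
    have hterm_int : ∀ j j' k : Fin n, k ≠ j' →
        Integrable (fun ω => R' j ω * Z' j ω * (R' k ω * Z' j' ω)) μ := by
      intro j j' k hkj'
      by_cases hjk : j = k
      · subst hjk
        have hjj' : j ≠ j' := hkj'
        have hfun : (fun ω => R' j ω * Z' j ω * (R' j ω * Z' j' ω))
            = fun ω => (R' j ω ^ 2 * Z' j ω) * Z' j' ω := by funext ω; ring
        rw [hfun]
        have hind : IndepFun (fun ω => R' j ω ^ 2 * Z' j ω) (Z' j') μ :=
          (hindep'.indepFun hjj').comp ((measurable_fst.pow_const 2).mul measurable_snd)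
            measurable_snd
        exact hind.integrable_mul (intRRZ j) ((mZ' j').integrable one_le_two)
      · by_cases hjj' : j = j'
        · subst hjj'
          have hfun : (fun ω => R' j ω * Z' j ω * (R' k ω * Z' j ω))
              = fun ω => (R' j ω * Z' j ω ^ 2) * R' k ω := by funext ω; ring
          rw [hfun]
          have hind : IndepFun (fun ω => R' j ω * Z' j ω ^ 2) (R' k) μ :=
            (hindep'.indepFun hjk).comp (measurable_fst.mul (measurable_snd.pow_const 2))
              measurable_fst
          exact hind.integrable_mul (intRZZ j) ((mR' k).integrable one_le_two)
        · have hfun : (fun ω => R' j ω * Z' j ω * (R' k ω * Z' j' ω))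
              = fun ω => (R' j ω * Z' j ω * R' k ω) * Z' j' ω := by funext ω; ring
          rw [hfun]
          have hind : IndepFun (fun ω => R' j ω * Z' j ω * R' k ω) (Z' j') μ :=
            (hindep'.indepFun_prodMk hX'meas j k j' hjj' hkj').comp
              ((measurable_fst.fst.mul measurable_fst.snd).mul measurable_snd.fst)
              measurable_snd
          have hintl : Integrable (fun ω => R' j ω * Z' j ω * R' k ω) μ :=
            ((hindep'.indepFun hjk).comp (measurable_fst.mul measurable_snd)
              measurable_fst).integrable_mul (intRZ j) ((mR' k).integrable one_le_two)
          exact hind.integrable_mul hintl ((mZ' j').integrable one_le_two)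
    have hmulR : ∀ j k : Fin n, ∫ ω, R' j ω * R' k ω ∂μ
        = if j = k then (∫ ω, R ω ^ 2 ∂μ) else (∫ ω, R ω ∂μ) ^ 2 := by
      intro j k
      by_cases hjk : j = k
      · subst hjk
        rw [if_pos rfl, ← eR2 j]
        exact integral_congr_ae (ae_of_all _ fun ω => (pow_two (R' j ω)).symm)
      · rw [if_neg hjk]
        have hind : IndepFun (R' j) (R' k) μ :=
          (hindep'.indepFun hjk).comp measurable_fst measurable_fst
        have := hind.integral_fun_mul_eq_mul_integral ((mR' j).integrable one_le_two).1
          ((mR' k).integrable one_le_two).1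
        calc ∫ ω, R' j ω * R' k ω ∂μ = (∫ ω, R' j ω ∂μ) * ∫ ω, R' k ω ∂μ := this
          _ = (∫ ω, R ω ∂μ) ^ 2 := by rw [eR1 j, eR1 k, pow_two]
    have hmulZ : ∀ j j' : Fin n, ∫ ω, Z' j ω * Z' j' ω ∂μ
        = if j = j' then (∫ ω, Z ω ^ 2 ∂μ) else (∫ ω, Z ω ∂μ) ^ 2 := by
      intro j j'
      by_cases hjj' : j = j'
      · subst hjj'
        rw [if_pos rfl, ← eZ2 j]
        exact integral_congr_ae (ae_of_all _ fun ω => (pow_two (Z' j ω)).symm)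
      · rw [if_neg hjj']
        have hind : IndepFun (Z' j) (Z' j') μ :=
          (hindep'.indepFun hjj').comp measurable_snd measurable_snd
        have := hind.integral_fun_mul_eq_mul_integral ((mZ' j).integrable one_le_two).1
          ((mZ' j').integrable one_le_two).1
        calc ∫ ω, Z' j ω * Z' j' ω ∂μ = (∫ ω, Z' j ω ∂μ) * ∫ ω, Z' j' ω ∂μ := this
          _ = (∫ ω, Z ω ∂μ) ^ 2 := by rw [eZ1 j, eZ1 j', pow_two]
    have hval : ∀ j j' k : Fin n, ∫ ω, R' j ω * Z' j ω * (R' k ω * Z' j' ω) ∂μ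
        = (if j = k then (∫ ω, R ω ^ 2 ∂μ) else (∫ ω, R ω ∂μ) ^ 2)
          * (if j = j' then (∫ ω, Z ω ^ 2 ∂μ) else (∫ ω, Z ω ∂μ) ^ 2) := by
      intro j j' k
      have h2 := hcov2 j j' j k
      simp only [covar] at h2
      have e0 : ∫ ω, Rv j ω * Rv k ω * (Zv j ω * Zv j' ω) ∂μ
          = ∫ ω, R' j ω * Z' j ω * (R' k ω * Z' j' ω) ∂μ := by
        refine integral_congr_ae ?_
        filter_upwards [hR'ae j, hR'ae k, hZ'ae j, hZ'ae j'] with ω h1 h2 h3 h4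
        rw [h1, h2, h3, h4]; ring
      have e1 : ∫ ω, Rv j ω * Rv k ω ∂μ = ∫ ω, R' j ω * R' k ω ∂μ := by
        refine integral_congr_ae ?_
        filter_upwards [hR'ae j, hR'ae k] with ω h1 h2
        rw [h1, h2]
      have e2 : ∫ ω, Zv j ω * Zv j' ω ∂μ = ∫ ω, Z' j ω * Z' j' ω ∂μ := by
        refine integral_congr_ae ?_
        filter_upwards [hZ'ae j, hZ'ae j'] with ω h1 h2
        rw [h1, h2]
      rw [e0, e1, e2] at h2
      rw [← hmulR j k, ← hmulZ j j']
      linarith [h2]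
    have hae : ∀ᵐ ω ∂μ, ∀ i, Rv i ω = R' i ω ∧ Zv i ω = Z' i ω :=
      ae_all_iff.2 fun i => (hR'ae i).and (hZ'ae i)
    have hLHSe : (∫ ω, (2 / ((n : ℝ) ^ 2 * ((n : ℝ) - 1))) * (∑ j, Rv j ω * Zv j ω)
          * (∑ j', ∑ k ∈ Finset.univ.erase j', Rv k ω * Zv j' ω) ∂μ)
        = ∫ ω, (2 / ((n : ℝ) ^ 2 * ((n : ℝ) - 1))) * (∑ j, R' j ω * Z' j ω)
          * (∑ j', ∑ k ∈ Finset.univ.erase j', R' k ω * Z' j' ω) ∂μ := by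
      refine integral_congr_ae ?_
      filter_upwards [hae] with ω hω
      congr 1
      · congr 1
        exact Finset.sum_congr rfl fun j _ => by rw [(hω j).1, (hω j).2]
      · exact Finset.sum_congr rfl fun j' _ => Finset.sum_congr rfl fun k _ => by
          rw [(hω k).1, (hω j').2]
    rw [hLHSe]
    set c : ℝ := 2 / ((n : ℝ) ^ 2 * ((n : ℝ) - 1)) with hcdef
    have hsplit : (∫ ω, c * (∑ j, R' j ω * Z' j ω)
          * (∑ j', ∑ k ∈ Finset.univ.erase j', R' k ω * Z' j' ω) ∂μ)
        = ∑ j : Fin n, ∑ j' : Fin n, ∑ k ∈ Finset.univ.erase j',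
            c * ∫ ω, R' j ω * Z' j ω * (R' k ω * Z' j' ω) ∂μ := by
      have hpt : ∀ ω, c * (∑ j, R' j ω * Z' j ω)
            * (∑ j', ∑ k ∈ Finset.univ.erase j', R' k ω * Z' j' ω)
          = ∑ j : Fin n, ∑ j' : Fin n, ∑ k ∈ Finset.univ.erase j',
              c * (R' j ω * Z' j ω * (R' k ω * Z' j' ω)) := by
        intro ω
        rw [mul_assoc, Finset.sum_mul_sum]
        simp only [Finset.mul_sum]
      rw [integral_congr_ae (ae_of_all _ hpt)]
      rw [integral_finset_sum _ (fun j _ => integrable_finset_sum _ (fun j' _ =>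
        integrable_finset_sum _ (fun k hk =>
          (hterm_int j j' k (Finset.mem_erase.mp hk).1).const_mul c)))]
      refine Finset.sum_congr rfl fun j _ => ?_
      rw [integral_finset_sum _ (fun j' _ => integrable_finset_sum _ (fun k hk =>
        (hterm_int j j' k (Finset.mem_erase.mp hk).1).const_mul c))]
      refine Finset.sum_congr rfl fun j' _ => ?_
      rw [integral_finset_sum _ (fun k hk =>
        (hterm_int j j' k (Finset.mem_erase.mp hk).1).const_mul c)]
      exact Finset.sum_congr rfl fun k _ => integral_const_mul c _
    rw [hsplit]
    simp only [hval]
    set a1 : ℝ := ∫ ω, R ω ∂μ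
    set a2 : ℝ := ∫ ω, R ω ^ 2 ∂μ
    set b1 : ℝ := ∫ ω, Z ω ∂μ
    set b2 : ℝ := ∫ ω, Z ω ^ 2 ∂μ
    have hsum1 : ∀ j j' : Fin n, (∑ k ∈ Finset.univ.erase j',
          (if j = k then a2 else a1 ^ 2))
        = ((n : ℝ) - 1) * a1 ^ 2 + (if j = j' then 0 else a2 - a1 ^ 2) := by
      intro j j'
      rw [Finset.sum_erase_eq_sub (Finset.mem_univ j')]
      have h1 : (∑ k : Fin n, (if j = k then a2 else a1 ^ 2))
          = (n : ℝ) * a1 ^ 2 + (a2 - a1 ^ 2) := by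
        have h2 : ∀ k : Fin n, (if j = k then a2 else a1 ^ 2)
            = a1 ^ 2 + (if j = k then a2 - a1 ^ 2 else 0) := fun k => by
          by_cases h : j = k <;> simp [h]
        rw [Finset.sum_congr rfl fun k _ => h2 k, Finset.sum_add_distrib,
          Finset.sum_const, Finset.sum_ite_eq]
        simp [Finset.card_univ, mul_comm]
      rw [h1]
      by_cases h : j = j' <;> simp [h] <;> ring
    have hcollapse : ∀ j j' : Fin n, (∑ k ∈ Finset.univ.erase j',
          c * ((if j = k then a2 else a1 ^ 2) * (if j = j' then b2 else b1 ^ 2)))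
        = c * (if j = j' then b2 else b1 ^ 2)
          * (((n : ℝ) - 1) * a1 ^ 2 + (if j = j' then 0 else a2 - a1 ^ 2)) := by
      intro j j'
      have h3 : ∀ k : Fin n, c * ((if j = k then a2 else a1 ^ 2)
            * (if j = j' then b2 else b1 ^ 2))
          = (c * (if j = j' then b2 else b1 ^ 2)) * (if j = k then a2 else a1 ^ 2) :=
        fun k => by ring
      rw [Finset.sum_congr rfl fun k _ => h3 k, ← Finset.mul_sum, hsum1 j j']
    simp only [hcollapse]
    have houter : ∀ j : Fin n, (∑ j' : Fin n, c * (if j = j' then b2 else b1 ^ 2)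
          * (((n : ℝ) - 1) * a1 ^ 2 + (if j = j' then 0 else a2 - a1 ^ 2)))
        = (n : ℝ) * (c * b1 ^ 2 * (((n : ℝ) - 1) * a1 ^ 2 + (a2 - a1 ^ 2)))
          + (c * b2 * (((n : ℝ) - 1) * a1 ^ 2)
            - c * b1 ^ 2 * (((n : ℝ) - 1) * a1 ^ 2 + (a2 - a1 ^ 2))) := by
      intro j
      have h4 : ∀ j' : Fin n, c * (if j = j' then b2 else b1 ^ 2)
            * (((n : ℝ) - 1) * a1 ^ 2 + (if j = j' then 0 else a2 - a1 ^ 2))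
          = c * b1 ^ 2 * (((n : ℝ) - 1) * a1 ^ 2 + (a2 - a1 ^ 2))
            + (if j = j' then (c * b2 * (((n : ℝ) - 1) * a1 ^ 2)
              - c * b1 ^ 2 * (((n : ℝ) - 1) * a1 ^ 2 + (a2 - a1 ^ 2))) else 0) := fun j' => by
        by_cases h : j = j' <;> simp [h] <;> ring
      rw [Finset.sum_congr rfl fun j' _ => h4 j', Finset.sum_add_distrib,
        Finset.sum_const, Finset.sum_ite_eq]
      simp [Finset.card_univ]
    simp only [houter]
    rw [Finset.sum_const, Finset.card_univ]
    simp only [Fintype.card_fin, nsmul_eq_mul]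
    rw [hcdef]
    field_simp
    ring
  · -- degenerate case: R^2 * Z^2 is not integrable
    have i0 : Fin n := ⟨0, by omega⟩
    have h00 := hcov2 i0 i0 i0 i0
    simp only [covar] at h00
    have hnint : ¬ Integrable (fun ω => Rv i0 ω * Rv i0 ω * (Zv i0 ω * Zv i0 ω)) μ := by
      intro hc
      apply hI
      have hid4 : IdentDistrib (fun ω => Rv i0 ω * Rv i0 ω * (Zv i0 ω * Zv i0 ω))
          (fun ω => R ω * R ω * (Z ω * Z ω)) μ μ :=
        (hident i0).comp ((measurable_fst.mul measurable_fst).mul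
          (measurable_snd.mul measurable_snd))
      have h5 := hid4.integrable_iff.1 hc
      have heq : (fun ω => R ω * R ω * (Z ω * Z ω)) = fun ω => R ω ^ 2 * Z ω ^ 2 := by
        funext ω; ring
      rwa [heq] at h5
    rw [integral_undef hnint] at h00
    have eRR : ∫ ω, Rv i0 ω * Rv i0 ω ∂μ = ∫ ω, R ω ^ 2 ∂μ := by
      have h6 : IdentDistrib (fun ω => Rv i0 ω * Rv i0 ω) (fun ω => R ω * R ω) μ μ :=
        (hident i0).comp (measurable_fst.mul measurable_fst)
      rw [h6.integral_eq]
      exact integral_congr_ae (ae_of_all _ fun ω => (pow_two (R ω)).symm)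
    have eZZ : ∫ ω, Zv i0 ω * Zv i0 ω ∂μ = ∫ ω, Z ω ^ 2 ∂μ := by
      have h6 : IdentDistrib (fun ω => Zv i0 ω * Zv i0 ω) (fun ω => Z ω * Z ω) μ μ :=
        (hident i0).comp (measurable_snd.mul measurable_snd)
      rw [h6.integral_eq]
      exact integral_congr_ae (ae_of_all _ fun ω => (pow_two (Z ω)).symm)
    rw [eRR, eZZ] at h00
    have hAB : (∫ ω, R ω ^ 2 ∂μ) * (∫ ω, Z ω ^ 2 ∂μ) = 0 := by linarith
    rcases mul_eq_zero.1 hAB with hA | hB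
    · -- R = 0 a.e.
      have hRv0 : ∀ i, Rv i =ᵐ[μ] 0 := by
        intro i
        have hidi : IdentDistrib (Rv i) R μ μ := (hident i).comp measurable_fst
        have hm2 : MemLp (Rv i) 2 μ := hidi.symm.memLp_snd hR2
        have h7 : ∫ ω, Rv i ω ^ 2 ∂μ = 0 := by
          have h11 := (hidi.comp (measurable_id.pow_const 2)).integral_eq
          simp only [Function.comp, id_eq] at h11
          rw [h11]; exact hA
        have h8 : (fun ω => Rv i ω ^ 2) =ᵐ[μ] 0 :=
          (integral_eq_zero_iff_of_nonneg (fun ω => sq_nonneg _) hm2.integrable_sq).1 h7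
        filter_upwards [h8] with ω h9
        simpa using pow_eq_zero_iff (two_ne_zero) |>.1 (by simpa using h9)
      have hRae : R =ᵐ[μ] 0 := by
        have h8 : (fun ω => R ω ^ 2) =ᵐ[μ] 0 :=
          (integral_eq_zero_iff_of_nonneg (fun ω => sq_nonneg _) hR2.integrable_sq).1 hA
        filter_upwards [h8] with ω h9
        simpa using pow_eq_zero_iff (two_ne_zero) |>.1 (by simpa using h9)
      have hL : (∫ ω, (2 / ((n : ℝ) ^ 2 * ((n : ℝ) - 1))) * (∑ j, Rv j ω * Zv j ω)
            * (∑ j', ∑ k ∈ Finset.univ.erase j', Rv k ω * Zv j' ω) ∂μ) = 0 := by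
        have h10 : (fun ω => (2 / ((n : ℝ) ^ 2 * ((n : ℝ) - 1))) * (∑ j, Rv j ω * Zv j ω)
              * (∑ j', ∑ k ∈ Finset.univ.erase j', Rv k ω * Zv j' ω)) =ᵐ[μ]
            fun _ => (0 : ℝ) := by
          filter_upwards [ae_all_iff.2 hRv0] with ω hω
          have hs : (∑ j, Rv j ω * Zv j ω) = 0 :=
            Finset.sum_eq_zero fun j _ => by
              have := hω j; simp only [Pi.zero_apply] at this; rw [this]; ring
          rw [hs]; ring
        rw [integral_congr_ae h10, integral_zero]
      rw [hL]
      have hA1 : ∫ ω, R ω ∂μ = 0 := by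
        rw [integral_congr_ae hRae]; simp
      rw [hA, hA1]
      ring
    · -- Z = 0 a.e.
      have hZv0 : ∀ i, Zv i =ᵐ[μ] 0 := by
        intro i
        have hidi : IdentDistrib (Zv i) Z μ μ := (hident i).comp measurable_snd
        have hm2 : MemLp (Zv i) 2 μ := hidi.symm.memLp_snd hZ2
        have h7 : ∫ ω, Zv i ω ^ 2 ∂μ = 0 := by
          have h11 := (hidi.comp (measurable_id.pow_const 2)).integral_eq
          simp only [Function.comp, id_eq] at h11
          rw [h11]; exact hB
        have h8 : (fun ω => Zv i ω ^ 2) =ᵐ[μ] 0 :=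
          (integral_eq_zero_iff_of_nonneg (fun ω => sq_nonneg _) hm2.integrable_sq).1 h7
        filter_upwards [h8] with ω h9
        simpa using pow_eq_zero_iff (two_ne_zero) |>.1 (by simpa using h9)
      have hZae : Z =ᵐ[μ] 0 := by
        have h8 : (fun ω => Z ω ^ 2) =ᵐ[μ] 0 :=
          (integral_eq_zero_iff_of_nonneg (fun ω => sq_nonneg _) hZ2.integrable_sq).1 hB
        filter_upwards [h8] with ω h9
        simpa using pow_eq_zero_iff (two_ne_zero) |>.1 (by simpa using h9)
      have hL : (∫ ω, (2 / ((n : ℝ) ^ 2 * ((n : ℝ) - 1))) * (∑ j, Rv j ω * Zv j ω)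
            * (∑ j', ∑ k ∈ Finset.univ.erase j', Rv k ω * Zv j' ω) ∂μ) = 0 := by
        have h10 : (fun ω => (2 / ((n : ℝ) ^ 2 * ((n : ℝ) - 1))) * (∑ j, Rv j ω * Zv j ω)
              * (∑ j', ∑ k ∈ Finset.univ.erase j', Rv k ω * Zv j' ω)) =ᵐ[μ]
            fun _ => (0 : ℝ) := by
          filter_upwards [ae_all_iff.2 hZv0] with ω hω
          have hs : (∑ j, Rv j ω * Zv j ω) = 0 :=
            Finset.sum_eq_zero fun j _ => by
              have := hω j; simp only [Pi.zero_apply] at this; rw [this]; ring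
          rw [hs]; ring
        rw [integral_congr_ae h10, integral_zero]
      rw [hL]
      have hB1 : ∫ ω, Z ω ∂μ = 0 := by
        rw [integral_congr_ae hZae]; simp
      rw [hB, hB1]
      ring
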